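/- arXiv:2102.06134 — 2 statements merged into one kernel-verified Lean document; each statement's English description precedes it below -/
import Mathlib

section
/- Let Π ⊆ S_n form an allowable graph of permutations with move set T. Then the inversion sets of moves in T partition the pair set E_n, and they coincide with the parallelism classes of the set of sign vectors {X^σ : σ ∈ Π} ⊆ {+,-}^{E_n}, where X^σ_{(i,j)} = + if σ^{-1}(i) < σ^{-1}(j) and - otherwise. -/
/-- The set `E_n = {(i,j) : 1 ≤ i < j ≤ n}`. -/
abbrev Pairs (n : ℕ) := {p : Fin n × Fin n // p.1 < p.2}

/-- The inversion set of a permutation (viewed as the word `σ(1), …, σ(n)`):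
pairs `i < j` such that `i` appears after `j`. -/
def invSet {n : ℕ} (σ : Equiv.Perm (Fin n)) : Set (Pairs n) :=
  {e | σ.symm e.1.2 < σ.symm e.1.1}

/-- A permutation of positions that reverses a collection of pairwise disjoint
intervals (substrings) and fixes everything else. -/
def IsBlockReversal {n : ℕ} (ρ : Equiv.Perm (Fin n)) : Prop :=
  ∃ (k : ℕ) (a b : Fin k → Fin n),
    (∀ t, a t ≤ b t) ∧
    (∀ s t, s ≠ t → (b s : ℕ) < (a t : ℕ) ∨ (b t : ℕ) < (a s : ℕ)) ∧
    (∀ p : Fin n,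
      (∃ t, a t ≤ p ∧ p ≤ b t ∧ ((ρ p : ℕ) = (a t : ℕ) + (b t : ℕ) - (p : ℕ))) ∨
      ((∀ t, ¬(a t ≤ p ∧ p ≤ b t)) ∧ ρ p = p))

/-- A move from `σ` to `γ`: `γ` is obtained from the word of `σ` by reversing one or
more disjoint substrings. -/
def IsMove {n : ℕ} (σ γ : Equiv.Perm (Fin n)) : Prop :=
  σ ≠ γ ∧ ∃ ρ : Equiv.Perm (Fin n), IsBlockReversal ρ ∧ ∀ p, γ p = σ (ρ p)

/-- The set of inversions of a move from `σ` to `γ`: `inv(σ) Δ inv(γ)`. -/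
def moveInv {n : ℕ} (σ γ : Equiv.Perm (Fin n)) : Set (Pairs n) :=
  symmDiff (invSet σ) (invSet γ)

/-- An allowable sequence in `P` from `σ` to `σ'` with moves in `T` (here a move in
`T` is recorded by its inversion set): a sequence of permutations of `P` in which
consecutive permutations differ by a move whose inversion set is in `T`, and each
pair is reversed at most once (the inversion sets of the steps are pairwise disjoint). -/
def AllowSeq {n : ℕ} (P : Set (Equiv.Perm (Fin n))) (T : Set (Set (Pairs n)))
    (σ σ' : Equiv.Perm (Fin n)) : Prop :=
  ∃ (l : ℕ) (γ : Fin (l + 1) → Equiv.Perm (Fin n)),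
    γ 0 = σ ∧ γ (Fin.last l) = σ' ∧ (∀ k, γ k ∈ P) ∧
    (∀ k : Fin l, IsMove (γ k.castSucc) (γ k.succ) ∧
      moveInv (γ k.castSucc) (γ k.succ) ∈ T) ∧
    (∀ k k' : Fin l, k ≠ k' →
      Disjoint (moveInv (γ k.castSucc) (γ k.succ)) (moveInv (γ k'.castSucc) (γ k'.succ)))

/-- The order-reversing permutation of positions. -/
def revFin (n : ℕ) : Equiv.Perm (Fin n) :=
  Function.Involutive.toPerm Fin.rev fun x => Fin.rev_rev x

/-- The reverse of a permutation: its word read backwards. -/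
def reversePerm {n : ℕ} (σ : Equiv.Perm (Fin n)) : Equiv.Perm (Fin n) :=
  σ * revFin n

/-- `P ⊆ S_n` together with a set of moves `T` forms an allowable graph of
permutations: (P1) `P` is symmetric (closed under reversal), (P2) any two
permutations of `P` are joined by an allowable sequence with moves in `T`,
(P3) the inversion sets of moves in `T` are pairwise equal or disjoint. -/
def IsAllowableGraph {n : ℕ} (P : Set (Equiv.Perm (Fin n)))
    (T : Set (Set (Pairs n))) : Prop :=
  (∀ σ ∈ P, reversePerm σ ∈ P) ∧
  (∀ σ ∈ P, ∀ σ' ∈ P, AllowSeq P T σ σ') ∧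
  (∀ D ∈ T, ∀ D' ∈ T, D = D' ∨ Disjoint D D')

/-- The sign vector `X^σ ∈ {+,-}^{E_n}` of a permutation:
`X^σ_{(i,j)} = +` iff `i` appears before `j` in the word of `σ`. -/
def permSign {n : ℕ} (σ : Equiv.Perm (Fin n)) : Pairs n → SignType := fun e =>
  if σ.symm e.1.1 < σ.symm e.1.2 then 1 else -1

/-- Two ground-set elements are parallel for the sign vectors of the permutations in
`P` : all sign vectors agree on them, or all disagree. -/
def ParallelIn {n : ℕ} (P : Set (Equiv.Perm (Fin n))) (e f : Pairs n) : Prop :=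
  (∀ σ ∈ P, permSign σ e = permSign σ f) ∨ (∀ σ ∈ P, permSign σ e = -permSign σ f)


section Helpers

lemma mem_moveInv_iff' {n : ℕ} {σ τ : Equiv.Perm (Fin n)} {e : Pairs n} :
    e ∈ moveInv σ τ ↔ ¬(e ∈ invSet σ ↔ e ∈ invSet τ) := by
  simp only [moveInv, Set.mem_symmDiff]; tauto

lemma chain_const' (b : ℕ → Prop) (m k : ℕ)
    (h : ∀ j, m ≤ j → j < m + k → (b j ↔ b (j+1))) : b m ↔ b (m + k) := by
  induction k with
  | zero => simp
  | succ k ih =>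
    have h1 := ih (fun j hj hj' => h j hj (by omega))
    have h2 := h (m+k) (by omega) (by omega)
    exact h1.trans h2

lemma not_mem_invSet_iff' {n : ℕ} {σ : Equiv.Perm (Fin n)} {e : Pairs n} :
    e ∉ invSet σ ↔ σ.symm e.1.1 < σ.symm e.1.2 := by
  have hne : σ.symm e.1.1 ≠ σ.symm e.1.2 := by
    intro hc
    exact absurd (σ.symm.injective hc ▸ e.2) (lt_irrefl _)
  simp only [invSet, Set.mem_setOf_eq, not_lt]
  exact ⟨hne.lt_of_le, le_of_lt⟩

lemma mem_invSet_reversePerm' {n : ℕ} {σ : Equiv.Perm (Fin n)} {e : Pairs n} :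
    e ∈ invSet (reversePerm σ) ↔ e ∉ invSet σ := by
  have h1 : ∀ a, (reversePerm σ).symm a = (σ.symm a).rev := fun a => rfl
  rw [not_mem_invSet_iff']
  simp only [invSet, Set.mem_setOf_eq, h1, Fin.rev_lt_rev]

lemma sign_eq_iff' {n : ℕ} {σ : Equiv.Perm (Fin n)} {e f : Pairs n} :
    permSign σ e = permSign σ f ↔ (e ∈ invSet σ ↔ f ∈ invSet σ) := by
  have he := @not_mem_invSet_iff' n σ e
  have hf := @not_mem_invSet_iff' n σ f
  have h2 : (e ∈ invSet σ ↔ f ∈ invSet σ) ↔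
      ((σ.symm e.1.1 < σ.symm e.1.2) ↔ (σ.symm f.1.1 < σ.symm f.1.2)) := by
    rw [← he, ← hf]; tauto
  rw [h2]; unfold permSign
  by_cases he' : σ.symm e.1.1 < σ.symm e.1.2 <;>
    by_cases hf' : σ.symm f.1.1 < σ.symm f.1.2 <;> simp [he', hf']

lemma sign_eq_neg_iff' {n : ℕ} {σ : Equiv.Perm (Fin n)} {e f : Pairs n} :
    permSign σ e = -permSign σ f ↔ ¬(e ∈ invSet σ ↔ f ∈ invSet σ) := by
  have he := @not_mem_invSet_iff' n σ e
  have hf := @not_mem_invSet_iff' n σ f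
  have h2 : (e ∈ invSet σ ↔ f ∈ invSet σ) ↔
      ((σ.symm e.1.1 < σ.symm e.1.2) ↔ (σ.symm f.1.1 < σ.symm f.1.2)) := by
    rw [← he, ← hf]; tauto
  rw [h2]; unfold permSign
  by_cases he' : σ.symm e.1.1 < σ.symm e.1.2 <;>
    by_cases hf' : σ.symm f.1.1 < σ.symm f.1.2 <;> simp [he', hf']

lemma path_flip_exists' {n : ℕ} {P : Set (Equiv.Perm (Fin n))} {T : Set (Set (Pairs n))}
    {σ σ' : Equiv.Perm (Fin n)} (hs : AllowSeq P T σ σ') (e : Pairs n)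
    (hflip : ¬(e ∈ invSet σ ↔ e ∈ invSet σ')) :
    ∃ τ ∈ P, ∃ τ' ∈ P, moveInv τ τ' ∈ T ∧ e ∈ moveInv τ τ' := by
  classical
  obtain ⟨l, γ, h0, hl, hmem, hmov, hdis⟩ := hs
  set b : ℕ → Prop := fun i => ∃ h : i < l + 1, e ∈ invSet (γ ⟨i, h⟩) with hbdef
  have hb : ∀ (i : ℕ) (h : i < l + 1), b i ↔ e ∈ invSet (γ ⟨i, h⟩) :=
    fun i h => ⟨fun ⟨_, x⟩ => x, fun x => ⟨h, x⟩⟩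
  have hb0 : b 0 ↔ e ∈ invSet σ := by
    rw [hb 0 (by omega), ← h0]
    exact iff_of_eq (congrArg (fun t => e ∈ invSet (γ t)) (Fin.ext (by simp)))
  have hbl : b l ↔ e ∈ invSet σ' := by
    rw [hb l (by omega), ← hl]
    exact iff_of_eq (congrArg (fun t => e ∈ invSet (γ t)) (Fin.ext (by simp)))
  have hstep : ∀ (i : ℕ) (hi : i < l),
      (¬(b i ↔ b (i+1))) ↔ e ∈ moveInv (γ (⟨i, hi⟩ : Fin l).castSucc) (γ (⟨i, hi⟩ : Fin l).succ) := by
    intro i hi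
    have e1 : (⟨i, hi⟩ : Fin l).castSucc = (⟨i, by omega⟩ : Fin (l+1)) := Fin.ext (by simp)
    have e2 : (⟨i, hi⟩ : Fin l).succ = (⟨i+1, by omega⟩ : Fin (l+1)) := Fin.ext (by simp)
    rw [mem_moveInv_iff', e1, e2, ← hb i (by omega), ← hb (i+1) (by omega)]
  have hex : ∃ i, ∃ hi : i < l, ¬(b i ↔ b (i+1)) := by
    by_contra hc
    push_neg at hc
    have := chain_const' b 0 l (fun j _ hj => hc j (by omega))
    rw [hb0, zero_add, hbl] at this
    exact hflip this
  obtain ⟨i, hi, hfl⟩ := hex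
  refine ⟨γ (⟨i, hi⟩ : Fin l).castSucc, hmem _, γ (⟨i, hi⟩ : Fin l).succ, hmem _,
    (hmov ⟨i, hi⟩).2, (hstep i hi).mp hfl⟩

lemma path_flip_mono' {n : ℕ} {P : Set (Equiv.Perm (Fin n))} {T : Set (Set (Pairs n))}
    {σ σ' : Equiv.Perm (Fin n)} (hs : AllowSeq P T σ σ') (e f : Pairs n)
    (hef : ∀ D ∈ T, e ∈ D → f ∈ D)
    (hflip : ¬(e ∈ invSet σ ↔ e ∈ invSet σ')) :
    ¬(f ∈ invSet σ ↔ f ∈ invSet σ') := by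
  classical
  obtain ⟨l, γ, h0, hl, hmem, hmov, hdis⟩ := hs
  set b : ℕ → Prop := fun i => ∃ h : i < l + 1, e ∈ invSet (γ ⟨i, h⟩) with hbdef
  set c : ℕ → Prop := fun i => ∃ h : i < l + 1, f ∈ invSet (γ ⟨i, h⟩) with hcdef
  have hb : ∀ (i : ℕ) (h : i < l + 1), b i ↔ e ∈ invSet (γ ⟨i, h⟩) :=
    fun i h => ⟨fun ⟨_, x⟩ => x, fun x => ⟨h, x⟩⟩
  have hc : ∀ (i : ℕ) (h : i < l + 1), c i ↔ f ∈ invSet (γ ⟨i, h⟩) :=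
    fun i h => ⟨fun ⟨_, x⟩ => x, fun x => ⟨h, x⟩⟩
  have hb0 : b 0 ↔ e ∈ invSet σ := by
    rw [hb 0 (by omega), ← h0]
    exact iff_of_eq (congrArg (fun t => e ∈ invSet (γ t)) (Fin.ext (by simp)))
  have hbl : b l ↔ e ∈ invSet σ' := by
    rw [hb l (by omega), ← hl]
    exact iff_of_eq (congrArg (fun t => e ∈ invSet (γ t)) (Fin.ext (by simp)))
  have hc0 : c 0 ↔ f ∈ invSet σ := by
    rw [hc 0 (by omega), ← h0]
    exact iff_of_eq (congrArg (fun t => f ∈ invSet (γ t)) (Fin.ext (by simp)))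
  have hcl : c l ↔ f ∈ invSet σ' := by
    rw [hc l (by omega), ← hl]
    exact iff_of_eq (congrArg (fun t => f ∈ invSet (γ t)) (Fin.ext (by simp)))
  have hstepb : ∀ (i : ℕ) (hi : i < l),
      (¬(b i ↔ b (i+1))) ↔ e ∈ moveInv (γ (⟨i, hi⟩ : Fin l).castSucc) (γ (⟨i, hi⟩ : Fin l).succ) := by
    intro i hi
    have e1 : (⟨i, hi⟩ : Fin l).castSucc = (⟨i, by omega⟩ : Fin (l+1)) := Fin.ext (by simp)
    have e2 : (⟨i, hi⟩ : Fin l).succ = (⟨i+1, by omega⟩ : Fin (l+1)) := Fin.ext (by simp)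
    rw [mem_moveInv_iff', e1, e2, ← hb i (by omega), ← hb (i+1) (by omega)]
  have hstepc : ∀ (i : ℕ) (hi : i < l),
      (¬(c i ↔ c (i+1))) ↔ f ∈ moveInv (γ (⟨i, hi⟩ : Fin l).castSucc) (γ (⟨i, hi⟩ : Fin l).succ) := by
    intro i hi
    have e1 : (⟨i, hi⟩ : Fin l).castSucc = (⟨i, by omega⟩ : Fin (l+1)) := Fin.ext (by simp)
    have e2 : (⟨i, hi⟩ : Fin l).succ = (⟨i+1, by omega⟩ : Fin (l+1)) := Fin.ext (by simp)
    rw [mem_moveInv_iff', e1, e2, ← hc i (by omega), ← hc (i+1) (by omega)]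
  have hex : ∃ i, ∃ hi : i < l, ¬(b i ↔ b (i+1)) := by
    by_contra hcon
    push_neg at hcon
    have := chain_const' b 0 l (fun j _ hj => hcon j (by omega))
    rw [hb0, zero_add, hbl] at this
    exact hflip this
  obtain ⟨i, hi, hfl⟩ := hex
  have hfD : f ∈ moveInv (γ (⟨i, hi⟩ : Fin l).castSucc) (γ (⟨i, hi⟩ : Fin l).succ) :=
    hef _ (hmov ⟨i, hi⟩).2 ((hstepb i hi).mp hfl)
  have hother : ∀ (j : ℕ) (hj : j < l), j ≠ i → (c j ↔ c (j+1)) := by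
    intro j hj hne
    by_contra hcc
    have hfD' := (hstepc j hj).mp hcc
    have hd := hdis ⟨j, hj⟩ ⟨i, hi⟩ (by simp [Fin.ext_iff, hne])
    exact absurd hfD (Set.disjoint_left.mp hd hfD')
  have h1 : c 0 ↔ c i := by
    have := chain_const' c 0 i (fun j _ hj => hother j (by omega) (by omega))
    rwa [zero_add] at this
  have h2 : c (i+1) ↔ c l := by
    have := chain_const' c (i+1) (l - i - 1) (fun j hj hj' => hother j (by omega) (by omega))
    have he : i + 1 + (l - i - 1) = l := by omega
    rwa [he] at this
  have h3 : ¬(c i ↔ c (i+1)) := (hstepc i hi).mpr hfD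
  intro hcc
  exact h3 (h1.symm.trans ((hc0.trans (hcc.trans hcl.symm)).trans h2.symm))

end Helpers

/-- In an allowable graph of permutations, the inversion sets of the moves of `T`
partition the pair set `E_n`, and they coincide with the parallelism classes of the
set of sign vectors `{X^σ : σ ∈ P}`. -/
theorem moves_are_parallel_classes {n : ℕ} (P : Set (Equiv.Perm (Fin n)))
    (T : Set (Set (Pairs n))) (h : IsAllowableGraph P T) (hne : P.Nonempty) :
    (∀ e : Pairs n, ∃ D ∈ T, e ∈ D ∧ D = {f | ParallelIn P e f}) ∧
    (∀ D ∈ T, ∀ e ∈ D, D = {f | ParallelIn P e f}) := by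
  obtain ⟨hrev, hconn, hdisj⟩ := h
  obtain ⟨σ0, hσ0⟩ := hne
  -- every pair is covered by a move inversion set that is realized along some path
  have hreal : ∀ e : Pairs n, ∃ D ∈ T, e ∈ D ∧
      ∃ τ ∈ P, ∃ τ' ∈ P, moveInv τ τ' = D := by
    intro e
    have hσ0' := hrev σ0 hσ0
    have hs := hconn σ0 hσ0 _ hσ0'
    have hflip : ¬(e ∈ invSet σ0 ↔ e ∈ invSet (reversePerm σ0)) := by
      rw [mem_invSet_reversePerm']; tauto
    obtain ⟨τ, hτ, τ', hτ', hDT, heD⟩ := path_flip_exists' hs e hflip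
    exact ⟨moveInv τ τ', hDT, heD, τ, hτ, τ', hτ', rfl⟩
  have hpart2 : ∀ D ∈ T, ∀ e ∈ D, D = {f | ParallelIn P e f} := by
    intro D hD e heD
    obtain ⟨D', hD', heD', τ, hτ, τ', hτ', hmv⟩ := hreal e
    have hDD' : D = D' := by
      rcases hdisj D hD D' hD' with hh | hh
      · exact hh
      · exact absurd heD' (Set.disjoint_left.mp hh heD)
    subst hDD'
    ext f
    simp only [Set.mem_setOf_eq]
    constructor
    · -- f ∈ D → parallel
      intro hfD
      have hef : ∀ D2 ∈ T, e ∈ D2 → f ∈ D2 := by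
        intro D2 hD2 he2
        rcases hdisj D hD D2 hD2 with hh | hh
        · exact hh ▸ hfD
        · exact absurd he2 (Set.disjoint_left.mp hh heD)
      have hfe : ∀ D2 ∈ T, f ∈ D2 → e ∈ D2 := by
        intro D2 hD2 hf2
        rcases hdisj D hD D2 hD2 with hh | hh
        · exact hh ▸ heD
        · exact absurd hf2 (Set.disjoint_left.mp hh hfD)
      have key : ∀ σ1 ∈ P, ∀ σ2 ∈ P,
          ((e ∈ invSet σ1 ↔ f ∈ invSet σ1) ↔ (e ∈ invSet σ2 ↔ f ∈ invSet σ2)) := by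
        intro σ1 h1 σ2 h2
        have hs := hconn σ1 h1 σ2 h2
        have he2f := path_flip_mono' hs e f hef
        have hf2e := path_flip_mono' hs f e hfe
        tauto
      by_cases hcase : (e ∈ invSet σ0 ↔ f ∈ invSet σ0)
      · left
        intro σ hσ
        rw [sign_eq_iff']
        exact (key σ hσ σ0 hσ0).mpr hcase
      · right
        intro σ hσ
        rw [sign_eq_neg_iff']
        exact fun hcc => hcase ((key σ hσ σ0 hσ0).mp hcc)
    · -- parallel → f ∈ D
      intro hpar
      by_contra hfD
      have heflip : ¬(e ∈ invSet τ ↔ e ∈ invSet τ') :=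
        mem_moveInv_iff'.mp (hmv ▸ heD)
      have hfnoflip : (f ∈ invSet τ ↔ f ∈ invSet τ') := by
        by_contra hcc
        exact hfD (hmv ▸ mem_moveInv_iff'.mpr hcc)
      rcases hpar with hp | hp
      · have h1 := sign_eq_iff'.mp (hp τ hτ)
        have h2 := sign_eq_iff'.mp (hp τ' hτ')
        tauto
      · have h1 := sign_eq_neg_iff'.mp (hp τ hτ)
        have h2 := sign_eq_neg_iff'.mp (hp τ' hτ')
        tauto
  refine ⟨fun e => ?_, hpart2⟩
  obtain ⟨D, hD, heD, _⟩ := hreal e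
  exact ⟨D, hD, heD, hpart2 D hD e heD⟩
end

section
/- Define the composition I ∘ J of two ordered partitions I = (I_1,...,I_l) and J = (J_1,...,J_{l'}) of [n] as the ordered partition obtained by refining each part I_k into the nonempty intersections I_k ∩ J_1, ..., I_k ∩ J_{l'} in this order. Then under the bijection I ↦ X^I between ordered partitions of [n] and braid covectors in {+,-,0}^{E_n} (X^I_{(i,j)} = sign(p_I(j) - p_I(i))), composition of ordered partitions corresponds to composition of sign vectors: X^{I∘J} = X^I ∘ X^J. -/
/-- An ordered partition of `[n]`, given by the associated surjection. -/
structure OrderedPartition (n : ℕ) where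
  parts : ℕ
  toFun : Fin n → Fin parts
  surj : Function.Surjective toFun

/-- The braid covector `X^I` of an ordered partition `I`:
`X^I_{(i,j)} = +` if `p_I(i) < p_I(j)`, `-` if `p_I(i) > p_I(j)`, `0` if equal. -/
def toSign {n : ℕ} (I : OrderedPartition n) : Pairs n → SignType := fun e =>
  if I.toFun e.1.1 < I.toFun e.1.2 then 1
  else if I.toFun e.1.2 < I.toFun e.1.1 then -1 else 0

/-- Composition of sign vectors: `(X ∘ Y)_e = X_e` if `X_e ≠ 0`, else `X_e`. -/
def signComp {E : Type*} (X Y : E → SignType) : E → SignType :=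
  fun e => if X e = 0 then Y e else X e

/-- `K` is the composition `I ∘ J` of ordered partitions: each part of `I` is refined
into its nonempty intersections with the parts of `J`, in the order of `J`.
Equivalently, `K` orders `[n]` lexicographically by `(p_I, p_J)`. -/
def IsComposition {n : ℕ} (I J K : OrderedPartition n) : Prop :=
  ∀ i j : Fin n, K.toFun i ≤ K.toFun j ↔
    (I.toFun i < I.toFun j ∨ (I.toFun i = I.toFun j ∧ J.toFun i ≤ J.toFun j))

/-- The composition `I ∘ J` of two ordered partitions exists, and under the bijection
`I ↦ X^I` between ordered partitions and braid covectors, composition of ordered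
partitions corresponds to composition of sign vectors: `X^{I∘J} = X^I ∘ X^J`. -/
theorem composition_partitions_eq_composition_signs {n : ℕ} (I J : OrderedPartition n) :
    (∃ K : OrderedPartition n, IsComposition I J K) ∧
    (∀ K : OrderedPartition n, IsComposition I J K →
      toSign K = signComp (toSign I) (toSign J)) := by
  constructor
  · -- existence
    set f : Fin n → ℕ := fun i => (I.toFun i : ℕ) * J.parts + (J.toFun i : ℕ) with hf
    set s : Finset ℕ := Finset.image f Finset.univ with hs
    have hmem : ∀ i, f i ∈ s := fun i => Finset.mem_image_of_mem f (Finset.mem_univ i)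
    set e := s.orderIsoOfFin rfl with he
    refine ⟨⟨s.card, fun i => e.symm ⟨f i, hmem i⟩, ?_⟩, ?_⟩
    · intro y
      rcases Finset.mem_image.mp (e y).2 with ⟨i, _, hi⟩
      exact ⟨i, by
        have : (⟨f i, hmem i⟩ : s) = e y := Subtype.ext hi
        simp [this]⟩
    · intro i j
      have key : e.symm ⟨f i, hmem i⟩ ≤ e.symm ⟨f j, hmem j⟩ ↔ f i ≤ f j := by
        rw [e.symm.le_iff_le, Subtype.mk_le_mk]
      rw [key]
      have hJi := (J.toFun i).isLt
      have hJj := (J.toFun j).isLt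
      simp only [hf, Fin.lt_iff_val_lt_val, Fin.le_iff_val_le_val, Fin.ext_iff]
      constructor
      · intro h
        rcases lt_trichotomy (I.toFun i : ℕ) (I.toFun j : ℕ) with h'|h'|h'
        · exact Or.inl h'
        · exact Or.inr ⟨h', by nlinarith⟩
        · exfalso; nlinarith
      · rintro (h | ⟨h1, h2⟩)
        · nlinarith
        · rw [h1]; omega
  · intro K hK
    funext p
    obtain ⟨⟨i, j⟩, hij⟩ := p
    have h1 := hK i j
    have h2 := hK j i
    simp only [toSign, signComp]
    rcases lt_trichotomy (I.toFun i) (I.toFun j) with h|h|h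
    · have hK1 : K.toFun i < K.toFun j := by
        rw [lt_iff_le_not_ge, h1, h2]
        exact ⟨Or.inl h, by
          rintro (h' | ⟨h', _⟩)
          · exact absurd h' (asymm h)
          · exact absurd h'.symm (ne_of_lt h)⟩
      simp [hK1, hK1.le, h, asymm h]
    · have hK1 : (K.toFun i ≤ K.toFun j ↔ J.toFun i ≤ J.toFun j) := by
        rw [h1]; simp [h]
      have hK2 : (K.toFun j ≤ K.toFun i ↔ J.toFun j ≤ J.toFun i) := by
        rw [h2]; simp [h]
      simp only [h, lt_irrefl, if_neg (lt_irrefl _)]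
      rcases lt_trichotomy (J.toFun i) (J.toFun j) with h'|h'|h'
      · have : K.toFun i < K.toFun j := by
          rw [lt_iff_le_not_ge, hK1, hK2]; exact ⟨le_of_lt h', not_le_of_gt h'⟩
        simp [this, h']
      · have hA : ¬ K.toFun i < K.toFun j := by
          rw [lt_iff_le_not_ge, hK1, hK2]; simp [h']
        have hB : ¬ K.toFun j < K.toFun i := by
          rw [lt_iff_le_not_ge, hK2, hK1]; simp [h']
        simp [hA, hB, h']
      · have : K.toFun j < K.toFun i := by
          rw [lt_iff_le_not_ge, hK2, hK1]; exact ⟨le_of_lt h', not_le_of_gt h'⟩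
        have h2 : ¬ K.toFun i < K.toFun j := asymm this
        simp [this, this.le, h2, h', asymm h']
    · have hK1 : K.toFun j < K.toFun i := by
        rw [lt_iff_le_not_ge, h1, h2]
        exact ⟨Or.inl h, by
          rintro (h' | ⟨h', _⟩)
          · exact absurd h' (asymm h)
          · exact absurd h'.symm (ne_of_lt h)⟩
      simp [hK1, hK1.le, h, asymm h]
end
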